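/- If m is odd then W_g(1) = 2^(m−1)·(1 + k_m(μ)), and if m is even then W_g(1) = 2^(m−1)·(k_m(μ) − 1). -/

import Mathlib

open Finset

/-- Absolute trace-style sum `Tr_n : F → F` for `n = 2m`. -/
def trN (m : ℕ) {F : Type*} [Field F] (x : F) : F :=
  ∑ i ∈ Finset.range (2 * m), x ^ (2 ^ i)

/-- Trace-style sum `Tr_m : F → F` (meant for elements of the subfield `K`). -/
def trM (m : ℕ) {F : Type*} [Field F] (x : F) : F :=
  ∑ i ∈ Finset.range m, x ^ (2 ^ i)

/-- `ε(0) = 1`, `ε(t) = -1` for `t ≠ 0`. -/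
def eps {F : Type*} [Field F] [DecidableEq F] (t : F) : ℤ :=
  if t = 0 then 1 else -1

/-- Kloosterman sum `k_m(μ) = ∑_{x ∈ K, x ≠ 0} χ_m(x + μ x⁻¹)`. -/
def klooM (m : ℕ) {F : Type*} [Field F] [Fintype F] [DecidableEq F] (μ : F) : ℤ :=
  ∑ x ∈ Finset.univ.filter (fun x : F => x ^ (2 ^ m) = x ∧ x ≠ 0),
    eps (trM m (x + μ * x⁻¹))

/-- Kloosterman sum over the big field: `k_n(μ) = ∑_{x ∈ F, x ≠ 0} χ_n(x + μ x⁻¹)`. -/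
def klooN (m : ℕ) {F : Type*} [Field F] [Fintype F] [DecidableEq F] (μ : F) : ℤ :=
  ∑ x ∈ Finset.univ.filter (fun x : F => x ≠ 0), eps (trN m (x + μ * x⁻¹))

/-- Walsh transform of `h : F → F` (with values in `{0,1}`) at `a`. -/
def walsh (m : ℕ) {F : Type*} [Field F] [Fintype F] [DecidableEq F] (h : F → F) (a : F) : ℤ :=
  ∑ x : F, eps (h x + trN m (a * x))

/-- The Boolean function `f_{λ,μ}(x) = Tr_n(λ x^{2^m+1}) + Tr_n(x)·Tr_n(μ x^{2^m-1})`. -/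
def fFun (m : ℕ) {F : Type*} [Field F] (l μ : F) : F → F :=
  fun x => trN m (l * x ^ (2 ^ m + 1)) + trN m x * trN m (μ * x ^ (2 ^ m - 1))

/-- The Boolean function
`g_{λ,μ}(x) = (1 + Tr_n(x))·Tr_n(λ x^{2^m+1}) + Tr_n(x)·Tr_n(μ x^{2^m-1})`. -/
def gFun (m : ℕ) {F : Type*} [Field F] (l μ : F) : F → F :=
  fun x => (1 + trN m x) * trN m (l * x ^ (2 ^ m + 1)) +
    trN m x * trN m (μ * x ^ (2 ^ m - 1))

set_option linter.unusedSectionVars false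
set_option linter.unusedVariables false

namespace Stmt17

open Polynomial

variable {F : Type*} [Field F]

lemma eps_zero [DecidableEq F] : eps (0 : F) = 1 := if_pos rfl

lemma eps_one [DecidableEq F] : eps (1 : F) = -1 := if_neg one_ne_zero

section Char2Basic

variable [CharP F 2]

lemma eps_add_one [DecidableEq F] {a : F} (ha : a = 0 ∨ a = 1) :
    eps (a + 1) = - eps a := by
  rcases ha with h | h <;> subst h
  · simp [eps]
  · rw [CharTwo.add_self_eq_zero]
    simp [eps]

lemma add_eq_zero_iff_eq' {a b : F} : a + b = 0 ↔ a = b := by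
  rw [← CharTwo.sub_eq_add, sub_eq_zero]

lemma mul_self_eq_one_iff' {u : F} : u * u = 1 ↔ u = 1 := by
  constructor
  · intro h
    have h2 : (2:F) = 0 := CharTwo.two_eq_zero
    have key : (u + 1) * (u + 1) = 0 := by linear_combination h + (u + 1) * h2
    have := mul_self_eq_zero.mp key
    rwa [add_eq_zero_iff_eq'] at this
  · intro h; rw [h, one_mul]

lemma trM_add (m : ℕ) (a b : F) : trM m (a + b) = trM m a + trM m b := by
  unfold trM
  rw [← Finset.sum_add_distrib]
  exact Finset.sum_congr rfl fun i _ => add_pow_char_pow ..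

lemma trM_sq (m : ℕ) (a : F) : trM m a ^ 2 = trM m (a ^ 2) := by
  unfold trM
  rw [sum_pow_char]
  exact Finset.sum_congr rfl fun i _ => by
    rw [← pow_mul, ← pow_mul, mul_comm]

omit [CharP F 2] in
lemma trM_zero (m : ℕ) : trM m (0 : F) = 0 := by
  unfold trM
  exact Finset.sum_eq_zero fun i _ => zero_pow (by positivity)

omit [CharP F 2] in
lemma trM_sq_arg {m : ℕ} {a : F} (ha : a ^ (2 ^ m) = a) :
    trM m (a ^ 2) = trM m a := by
  have h1 := Finset.sum_range_succ' (fun i => a ^ (2 ^ i)) m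
  have h2 := Finset.sum_range_succ (fun i => a ^ (2 ^ i)) m
  simp only [pow_zero, pow_one] at h1
  rw [ha] at h2
  have key : (∑ i ∈ Finset.range m, a ^ (2 ^ (i + 1))) + a
      = (∑ i ∈ Finset.range m, a ^ (2 ^ i)) + a := by
    rw [← h1, h2]
  have h3 : trM m (a ^ 2) = ∑ i ∈ Finset.range m, a ^ (2 ^ (i + 1)) := by
    unfold trM
    exact Finset.sum_congr rfl fun i _ => by
      rw [← pow_mul, pow_succ, mul_comm (2 ^ i) 2, mul_comm 2 (2 ^ i)]
  rw [h3]
  exact add_right_cancel key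

lemma trM_idem {m : ℕ} {a : F} (ha : a ^ (2 ^ m) = a) :
    trM m a = 0 ∨ trM m a = 1 := by
  have h : trM m a ^ 2 = trM m a := by rw [trM_sq, trM_sq_arg ha]
  have h2 : trM m a * (trM m a - 1) = 0 := by linear_combination h
  rcases mul_eq_zero.mp h2 with h3 | h3
  · exact Or.inl h3
  · exact Or.inr (sub_eq_zero.mp h3)

omit [CharP F 2] in
lemma trN_split (m : ℕ) (x : F) :
    trN m x = trM m x + trM m (x ^ (2 ^ m)) := by
  unfold trN trM
  rw [two_mul, Finset.sum_range_add]
  congr 1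
  exact Finset.sum_congr rfl fun i _ => by rw [pow_add, pow_mul]

lemma trN_eq_trM (m : ℕ) (x : F) : trN m x = trM m (x + x ^ (2 ^ m)) := by
  rw [trM_add, trN_split]

omit [CharP F 2] in
lemma trN_zero (m : ℕ) : trN m (0 : F) = 0 := by
  unfold trN
  exact Finset.sum_eq_zero fun i _ => zero_pow (by positivity)

lemma trN_lambda {m : ℕ} {l : F} (hl : l + l ^ (2 ^ m) = 1) {z : F}
    (hz : z ^ (2 ^ m) = z) : trN m (l * z) = trM m z := by
  rw [trN_eq_trM, mul_pow, hz]
  have harg : l * z + l ^ (2 ^ m) * z = z := by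
    rw [← add_mul, hl, one_mul]
  rw [harg]

lemma cube_iff {u : F} (hu3 : u ^ 3 = 1) (hu1 : u ≠ 1) : u + u⁻¹ = 1 := by
  have h2 : (2:F) = 0 := CharTwo.two_eq_zero
  have hu0 : u ≠ 0 := by
    intro h; rw [h] at hu3; simp at hu3
  have hfac : (u + 1) * (u * u + u + 1) = 0 := by
    linear_combination hu3 + (u * u + u + 1) * h2
  have hne : u + 1 ≠ 0 := by
    intro h; exact hu1 (add_eq_zero_iff_eq'.mp h)
  have hq : u * u + u + 1 = 0 := by
    rcases mul_eq_zero.mp hfac with h | h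
    · exact absurd h hne
    · exact h
  have husq : u * u = u + 1 := by
    have := add_eq_zero_iff_eq'.mp (show (u * u) + (u + 1) = 0 by linear_combination hq)
    exact this
  have hinv : u⁻¹ = u * u := by
    have h3 : u * (u * u) = 1 := by
      have : u ^ 3 = u * (u * u) := by ring
      rw [← this, hu3]
    exact (eq_inv_of_mul_eq_one_right h3).symm ▸ (inv_eq_of_mul_eq_one_right h3).symm
  rw [hinv, husq]
  linear_combination u * h2

lemma cube_of_c {u : F} (hu0 : u ≠ 0) (hc : u + u⁻¹ = 1) : u ^ 3 = 1 ∧ u ≠ 1 := by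
  have h2 : (2:F) = 0 := CharTwo.two_eq_zero
  have husq : u * u + 1 = u := by
    have h := congrArg (· * u) hc
    simp only [add_mul, one_mul] at h
    rwa [inv_mul_cancel₀ hu0] at h
  have husq2 : u * u = u + 1 := by linear_combination husq - h2
  constructor
  · linear_combination (u + 1) * husq2 + u * h2
  · intro h
    rw [h, inv_one, CharTwo.add_self_eq_zero] at hc
    exact zero_ne_one hc

lemma c_zero_iff {u : F} (hu0 : u ≠ 0) : u + u⁻¹ = 0 ↔ u = 1 := by
  rw [add_eq_zero_iff_eq']
  constructor
  · intro h
    apply mul_self_eq_one_iff'.mp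
    nth_rewrite 2 [h]
    exact mul_inv_cancel₀ hu0
  · rintro rfl; rw [inv_one]

end Char2Basic

lemma dvd3_odd {m : ℕ} (hmo : Odd m) : 3 ∣ 2 ^ m + 1 := by
  rw [← ZMod.natCast_eq_zero_iff]
  push_cast
  norm_num
  rw [show ((2:ZMod 3)) = -1 by decide, hmo.neg_one_pow]
  ring

lemma dvd3_even {m : ℕ} (hme : Even m) : 3 ∣ 2 ^ m - 1 := by
  have h1 : (1:ℕ) ≤ 2 ^ m := Nat.one_le_two_pow
  rw [← ZMod.natCast_eq_zero_iff]
  rw [Nat.cast_sub h1]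
  push_cast
  rw [show ((2:ZMod 3)) = -1 by decide, hme.neg_one_pow]
  ring

lemma natid1 (t : ℕ) (ht : 1 ≤ t) :
    (2 * t + 1) * t * (2 * t + 1) = (2 * t + 1) + (2 * t * (2 * t) - 1) * (t + 1) := by
  have h : 1 ≤ 2 * t * (2 * t) := by nlinarith
  zify [h]
  ring

lemma natid2 (q t : ℕ) (hq : 1 ≤ q) :
    (q + 1) * t * q = (q + 1) * t + (q * q - 1) * t := by
  have h : 1 ≤ q * q := Nat.one_le_iff_ne_zero.mpr (by positivity)
  zify [h]
  ring

section Sets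
variable [Fintype F] [DecidableEq F]

lemma card_pow_eq_one {d : ℕ} (hd : 0 < d) (hdvd : d ∣ Fintype.card F - 1) :
    (Finset.univ.filter fun x : F => x ^ d = 1).card = d := by
  classical
  have key : ∀ x : F, x ^ d = 1 → x ≠ 0 := by
    intro x hx h; rw [h, zero_pow hd.ne'] at hx; exact zero_ne_one hx
  have hcard_eq : (Finset.univ.filter fun x : Fˣ => x ^ d = 1).card
      = (Finset.univ.filter fun x : F => x ^ d = 1).card := by
    refine Finset.card_bij' (fun (x : Fˣ) _ => (x : F))
      (fun (x : F) hx => Units.mk0 x (key x (by simpa using hx))) ?_ ?_ ?_ ?_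
    · intro x hx
      simp only [Finset.mem_filter, Finset.mem_univ, true_and] at hx ⊢
      rw [← Units.val_pow_eq_pow_val, hx, Units.val_one]
    · intro x hx
      simp only [Finset.mem_filter, Finset.mem_univ, true_and] at hx ⊢
      ext
      rw [Units.val_pow_eq_pow_val, Units.val_mk0]
      exact hx
    · intro x hx; ext; rfl
    · intro x hx; rfl
  rw [← hcard_eq]
  have hN : Fintype.card Fˣ = Fintype.card F - 1 := Fintype.card_units (α := F)
  have hdvd' : d ∣ Fintype.card Fˣ := by rw [hN]; exact hdvd
  have hN0 : 0 < Fintype.card Fˣ := Fintype.card_pos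
  refine le_antisymm (IsCyclic.card_pow_eq_one_le hd) ?_
  obtain ⟨g, hg⟩ := IsCyclic.exists_ofOrder_eq_natCard (α := Fˣ)
  rw [Nat.card_eq_fintype_card] at hg
  set N := Fintype.card Fˣ with hNdef
  have hNd_dvd : N / d ∣ N := Nat.div_dvd_of_dvd hdvd'
  have hNd0 : 0 < N / d := Nat.div_pos (Nat.le_of_dvd hN0 hdvd') hd
  have hordh : orderOf (g ^ (N / d)) = d := by
    rw [orderOf_pow' _ hNd0.ne', hg, Nat.gcd_eq_right hNd_dvd, Nat.div_div_self hdvd' hN0.ne']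
  calc d = (Finset.range d).card := (Finset.card_range d).symm
    _ ≤ _ := ?_
  apply Finset.card_le_card_of_injOn (fun i => (g ^ (N / d)) ^ i)
  · intro i _
    simp only [Finset.mem_coe, Finset.mem_filter, Finset.mem_univ, true_and]
    have hgd : (g ^ (N / d)) ^ d = 1 := by
      rw [← pow_mul, Nat.div_mul_cancel hdvd', ← hg, pow_orderOf_eq_one]
    rw [← pow_mul, mul_comm i d, pow_mul, hgd, one_pow]
  · intro i hi j hj hij
    refine pow_injOn_Iio_orderOf ?_ ?_ hij
    · simp only [Finset.coe_range, Set.mem_Iio] at hi ⊢; rwa [hordh]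
    · simp only [Finset.coe_range, Set.mem_Iio] at hj ⊢; rwa [hordh]


def Kset (m : ℕ) (F : Type*) [Field F] [Fintype F] [DecidableEq F] : Finset F :=
  Finset.univ.filter fun x => x ^ (2 ^ m) = x

def Kstar (m : ℕ) (F : Type*) [Field F] [Fintype F] [DecidableEq F] : Finset F :=
  Finset.univ.filter fun x => x ^ (2 ^ m) = x ∧ x ≠ 0

def Uset (m : ℕ) (F : Type*) [Field F] [Fintype F] [DecidableEq F] : Finset F :=
  Finset.univ.filter fun x => x ^ (2 ^ m + 1) = 1

variable {m : ℕ}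
lemma mem_Kset {x : F} : x ∈ Kset m F ↔ x ^ (2 ^ m) = x := by simp [Kset]
lemma mem_Kstar {x : F} : x ∈ Kstar m F ↔ x ^ (2 ^ m) = x ∧ x ≠ 0 := by simp [Kstar]
lemma mem_Uset {x : F} : x ∈ Uset m F ↔ x ^ (2 ^ m + 1) = 1 := by simp [Uset]

lemma U_ne_zero {u : F} (hu : u ∈ Uset m F) : u ≠ 0 := by
  rw [mem_Uset] at hu
  intro h
  rw [h, zero_pow (Nat.succ_ne_zero _)] at hu
  exact zero_ne_one hu

lemma U_pow_q {u : F} (hu : u ∈ Uset m F) : u ^ (2 ^ m) = u⁻¹ := by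
  rw [mem_Uset, pow_succ] at hu
  exact eq_inv_of_mul_eq_one_left hu

lemma U_inv_pow_q {u : F} (hu : u ∈ Uset m F) : (u⁻¹) ^ (2 ^ m) = u := by
  rw [inv_pow, U_pow_q hu, inv_inv]

lemma Kstar_pow {y : F} (hy : y ∈ Kstar m F) (hm : 0 < m) : y ^ (2 ^ m - 1) = 1 := by
  rw [mem_Kstar] at hy
  have h1 : (1:ℕ) ≤ 2 ^ m := Nat.one_le_two_pow
  have key : y ^ (2 ^ m - 1) * y = 1 * y := by
    rw [← pow_succ, Nat.sub_add_cancel h1, hy.1, one_mul]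
  exact mul_right_cancel₀ hy.2 key

lemma Kset_insert : Kset m F = insert 0 (Kstar m F) := by
  ext x
  simp only [mem_Kset, Finset.mem_insert, mem_Kstar]
  constructor
  · intro h
    by_cases hx : x = 0
    · exact Or.inl hx
    · exact Or.inr ⟨h, hx⟩
  · rintro (h | h)
    · rw [h]; exact zero_pow (by positivity)
    · exact h.1

lemma zero_not_mem_Kstar : (0 : F) ∉ Kstar m F := by simp [mem_Kstar]

lemma one_mem_Kstar : (1 : F) ∈ Kstar m F := by simp [mem_Kstar]

lemma one_mem_Uset : (1 : F) ∈ Uset m F := by simp [mem_Uset]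

lemma card_Kstar (hm : 0 < m) (hcard : Fintype.card F = 2 ^ (2 * m)) : (Kstar m F).card = 2 ^ m - 1 := by
  have h1 : (1:ℕ) ≤ 2 ^ m := Nat.one_le_two_pow
  have h2 : (2:ℕ) ≤ 2 ^ m := by
    calc (2:ℕ) = 2 ^ 1 := (pow_one 2).symm
    _ ≤ 2 ^ m := Nat.pow_le_pow_right (by norm_num) hm
  have hset : Kstar m F = Finset.univ.filter fun x : F => x ^ (2 ^ m - 1) = 1 := by
    ext x
    simp only [mem_Kstar, Finset.mem_filter, Finset.mem_univ, true_and]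
    constructor
    · intro hx
      have key : x ^ (2 ^ m - 1) * x = 1 * x := by
        rw [← pow_succ, Nat.sub_add_cancel h1, hx.1, one_mul]
      exact mul_right_cancel₀ hx.2 key
    · intro hx
      have hx0 : x ≠ 0 := by
        intro h
        rw [h, zero_pow (by omega)] at hx
        exact zero_ne_one hx
      refine ⟨?_, hx0⟩
      rw [← Nat.sub_add_cancel h1, pow_succ, hx, one_mul]
  rw [hset]
  apply card_pow_eq_one (by omega)
  rw [hcard]
  have := Nat.sub_dvd_pow_sub_pow (2 ^ m) 1 2
  rw [one_pow, ← pow_mul, mul_comm m 2] at this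
  exact this

lemma card_Kset (hm : 0 < m) (hcard : Fintype.card F = 2 ^ (2 * m)) : (Kset m F).card = 2 ^ m := by
  rw [Kset_insert, Finset.card_insert_of_notMem zero_not_mem_Kstar,
    card_Kstar hm hcard]
  have h1 : (1:ℕ) ≤ 2 ^ m := Nat.one_le_two_pow
  omega

lemma card_Uset (hm : 0 < m) (hcard : Fintype.card F = 2 ^ (2 * m)) : (Uset m F).card = 2 ^ m + 1 := by
  apply card_pow_eq_one (by positivity)
  rw [hcard]
  have h1 : (1:ℕ) ≤ 2 ^ m := Nat.one_le_two_pow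
  obtain ⟨s, hs⟩ : ∃ s, 2 ^ m = s + 1 := ⟨2 ^ m - 1, by omega⟩
  refine ⟨2 ^ m - 1, ?_⟩
  rw [two_mul, pow_add, hs]
  have e1 : (s + 1) * (s + 1) = s * s + 2 * s + 1 := by ring
  have e2 : (s + 1 + 1) * (s + 1 - 1) = s * s + 2 * s := by
    simp only [Nat.add_sub_cancel]
    ring
  rw [e1, e2]
  omega


lemma dvd3_card (hcard : Fintype.card F = 2 ^ (2 * m)) : 3 ∣ Fintype.card F - 1 := by
  rw [hcard]
  have := Nat.sub_dvd_pow_sub_pow 4 1 m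
  rw [one_pow] at this
  have h4 : (4:ℕ) ^ m = 2 ^ (2 * m) := by
    rw [show (4:ℕ) = 2 ^ 2 from rfl, ← pow_mul]
  rw [← h4]
  exact this


section C2
variable [CharP F 2]

lemma sum_Kset_add {a : F} (ha : a ^ (2 ^ m) = a) (G : F → ℤ) :
    ∑ y ∈ Kset m F, G (a + y) = ∑ y ∈ Kset m F, G y := by
  refine Finset.sum_nbij' (fun y => a + y) (fun y => a + y) ?_ ?_ ?_ ?_ ?_
  · intro y hy
    rw [mem_Kset] at hy ⊢
    rw [add_pow_char_pow, ha, hy]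
  · intro y hy
    rw [mem_Kset] at hy ⊢
    rw [add_pow_char_pow, ha, hy]
  · intro y _; rw [← add_assoc, CharTwo.add_self_eq_zero, zero_add]
  · intro y _; rw [← add_assoc, CharTwo.add_self_eq_zero, zero_add]
  · intro y _; rfl

lemma sum_Kset_mul {a : F} (haK : a ^ (2 ^ m) = a) (ha : a ≠ 0) (G : F → ℤ) :
    ∑ y ∈ Kset m F, G (a * y) = ∑ y ∈ Kset m F, G y := by
  refine Finset.sum_nbij' (fun y => a * y) (fun y => a⁻¹ * y) ?_ ?_ ?_ ?_ ?_
  · intro y hy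
    rw [mem_Kset] at hy ⊢
    rw [mul_pow, haK, hy]
  · intro y hy
    rw [mem_Kset] at hy ⊢
    rw [mul_pow, inv_pow, haK, hy]
  · intro y _; rw [← mul_assoc, inv_mul_cancel₀ ha, one_mul]
  · intro y _; rw [← mul_assoc, mul_inv_cancel₀ ha, one_mul]
  · intro y _; rfl

lemma sum_Kstar_mul {a : F} (haK : a ^ (2 ^ m) = a) (ha : a ≠ 0) (G : F → ℤ) :
    ∑ y ∈ Kstar m F, G (a * y) = ∑ y ∈ Kstar m F, G y := by
  have hKs : ∀ b : F, b ≠ 0 → (b * ·) ⁻¹' {(0:F)}ᶜ ⊆ {(0:F)}ᶜ := by intro _ _ _; simp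
  refine Finset.sum_nbij' (fun y => a * y) (fun y => a⁻¹ * y) ?_ ?_ ?_ ?_ ?_
  · intro y hy
    simp only [Kstar, Finset.mem_filter, Finset.mem_univ, true_and] at hy ⊢
    exact ⟨by rw [mul_pow, haK, hy.1], mul_ne_zero ha hy.2⟩
  · intro y hy
    simp only [Kstar, Finset.mem_filter, Finset.mem_univ, true_and] at hy ⊢
    exact ⟨by rw [mul_pow, inv_pow, haK, hy.1], mul_ne_zero (inv_ne_zero ha) hy.2⟩
  · intro y _; rw [← mul_assoc, inv_mul_cancel₀ ha, one_mul]
  · intro y _; rw [← mul_assoc, mul_inv_cancel₀ ha, one_mul]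
  · intro y _; rfl

lemma exists_trM_one (hm : 0 < m) (hcard : Fintype.card F = 2 ^ (2 * m)) : ∃ y ∈ Kset m F, trM m y = 1 := by
  by_contra hcon
  push_neg at hcon
  set P : Polynomial F := ∑ i ∈ Finset.range m, (Polynomial.X : Polynomial F) ^ (2 ^ i) with hP
  have hPeval : ∀ y : F, P.eval y = trM m y := by
    intro y
    rw [hP, Polynomial.eval_finset_sum]
    simp [trM]
  have hPne : P ≠ 0 := by
    intro h0
    have hc : P.coeff 1 = 1 := by
      rw [hP, Polynomial.finset_sum_coeff]
      have : ∀ i ∈ Finset.range m, ((Polynomial.X : Polynomial F) ^ (2 ^ i)).coeff 1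
          = if i = 0 then 1 else 0 := by
        intro i _
        rw [Polynomial.coeff_X_pow]
        congr 1
        simp only [eq_iff_iff]
        constructor
        · intro h
          by_contra hi
          have : 2 ≤ 2 ^ i := by
            calc (2:ℕ) = 2 ^ 1 := (pow_one 2).symm
            _ ≤ 2 ^ i := Nat.pow_le_pow_right (by norm_num) (by omega)
          omega
        · intro h; rw [h]; rfl
      rw [Finset.sum_congr rfl this, Finset.sum_ite_eq' (Finset.range m) 0 (fun _ => (1:F))]
      simp [Finset.mem_range, hm]
    rw [h0] at hc
    simp at hc
  have hdeg : P.natDegree < 2 ^ m := by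
    have h1 : P.natDegree ≤ 2 ^ (m - 1) := by
      apply Polynomial.natDegree_sum_le_of_forall_le
      intro i hi
      rw [Polynomial.natDegree_X_pow]
      exact Nat.pow_le_pow_right (by norm_num) (by simp only [Finset.mem_range] at hi; omega)
    have h2 : (2:ℕ) ^ (m - 1) < 2 ^ m := Nat.pow_lt_pow_right (by norm_num) (by omega)
    omega
  have hsub : Kset m F ⊆ P.roots.toFinset := by
    intro y hy
    rw [Multiset.mem_toFinset, Polynomial.mem_roots hPne]
    rw [Polynomial.IsRoot, hPeval]
    rcases trM_idem (mem_Kset.mp hy) with h | h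
    · exact h
    · exact absurd h (hcon y hy)
  have hcontr : (2:ℕ) ^ m ≤ P.natDegree := by
    calc (2:ℕ) ^ m = (Kset m F).card := (card_Kset hm hcard).symm
    _ ≤ P.roots.toFinset.card := Finset.card_le_card hsub
    _ ≤ Multiset.card P.roots := Multiset.toFinset_card_le _
    _ ≤ P.natDegree := Polynomial.card_roots' P
  omega

lemma sum_eps_Kset (hm : 0 < m) (hcard : Fintype.card F = 2 ^ (2 * m)) : ∑ y ∈ Kset m F, eps (trM m y) = 0 := by
  obtain ⟨y₀, hy₀K, hy₀⟩ := exists_trM_one hm hcard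
  have key : ∑ y ∈ Kset m F, eps (trM m y)
      = ∑ y ∈ Kset m F, eps (trM m (y₀ + y)) :=
    (sum_Kset_add (mem_Kset.mp hy₀K) (fun y => eps (trM m y))).symm
  have key2 : ∀ y ∈ Kset m F, eps (trM m (y₀ + y)) = - eps (trM m y) := by
    intro y hy
    rw [trM_add, hy₀, add_comm]
    exact eps_add_one (trM_idem (mem_Kset.mp hy))
  rw [Finset.sum_congr rfl key2, Finset.sum_neg_distrib] at key
  omega

lemma inner_sum (hm : 0 < m) (hcard : Fintype.card F = 2 ^ (2 * m)) {a : F} (haK : a ^ (2 ^ m) = a) :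
    ∑ y ∈ Kstar m F, eps (trM m (a * y)) = if a = 0 then (2 ^ m - 1 : ℤ) else -1 := by
  split_ifs with ha
  · subst ha
    have : ∀ y ∈ Kstar m F, eps (trM m ((0:F) * y)) = 1 := by
      intro y _
      rw [zero_mul, trM_zero, eps_zero]
    rw [Finset.sum_congr rfl this, Finset.sum_const, card_Kstar hm hcard]
    have h1 : (1:ℕ) ≤ 2 ^ m := Nat.one_le_two_pow
    rw [nsmul_eq_mul, mul_one, Nat.cast_sub h1]
    push_cast
    ring
  · have h0 : ∑ y ∈ Kset m F, eps (trM m (a * y)) = 0 := by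
      rw [sum_Kset_mul haK ha (fun y => eps (trM m y))]
      exact sum_eps_Kset hm hcard
    rw [Kset_insert, Finset.sum_insert zero_not_mem_Kstar] at h0
    rw [mul_zero, trM_zero, eps_zero] at h0
    omega


lemma pow_qq (hcard : Fintype.card F = 2 ^ (2 * m)) (x : F) :
    x ^ (2 ^ m * 2 ^ m) = x := by
  have h := FiniteField.pow_card x
  rwa [hcard, two_mul, pow_add] at h

lemma pow_qq_sub_one (hcard : Fintype.card F = 2 ^ (2 * m)) {x : F} (hx : x ≠ 0) :
    x ^ (2 ^ m * 2 ^ m - 1) = 1 := by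
  have h1 : (1:ℕ) ≤ 2 ^ m * 2 ^ m := Nat.one_le_iff_ne_zero.mpr (by positivity)
  have key : x ^ (2 ^ m * 2 ^ m - 1) * x = 1 * x := by
    rw [← pow_succ, Nat.sub_add_cancel h1, pow_qq hcard, one_mul]
  exact mul_right_cancel₀ hx key

lemma sum_Fstar (hm : 0 < m) (hcard : Fintype.card F = 2 ^ (2 * m)) (f : F → ℤ) :
    ∑ x ∈ Finset.univ.filter (fun x : F => x ≠ 0), f x
      = ∑ u ∈ Uset m F, ∑ y ∈ Kstar m F, f (u * y) := by
  rw [← Finset.sum_product']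
  obtain ⟨k, hk⟩ : ∃ k, m = k + 1 := ⟨m - 1, by omega⟩
  subst hk
  set t : ℕ := 2 ^ k with ht
  have hq : (2:ℕ) ^ (k + 1) = 2 * t := by rw [pow_succ, mul_comm]
  set q : ℕ := 2 ^ (k + 1) with hqdef
  set e : ℕ := (q + 1) * t with he
  have hqq1 : (1:ℕ) ≤ q * q := Nat.one_le_iff_ne_zero.mpr (by positivity)
  refine (Finset.sum_nbij' (fun p : F × F => p.1 * p.2)
    (fun x : F => (x * (x ^ e)⁻¹, x ^ e)) ?_ ?_ ?_ ?_ ?_).symm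
  · -- maps product into Fstar
    rintro ⟨u, y⟩ hp
    rw [Finset.mem_product] at hp
    obtain ⟨hu, hy⟩ := hp
    simp only [Uset, Kstar, Finset.mem_filter, Finset.mem_univ, true_and] at hu hy
    simp only [Finset.mem_filter, Finset.mem_univ, true_and]
    have hu0 : u ≠ 0 := by
      intro h; rw [h, zero_pow (Nat.succ_ne_zero _)] at hu; exact zero_ne_one hu
    exact mul_ne_zero hu0 hy.2
  · -- maps Fstar into product
    intro x hx
    simp only [Finset.mem_filter, Finset.mem_univ, true_and] at hx
    have hx1 : x ^ (q * q - 1) = 1 := pow_qq_sub_one hcard hx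
    have hxe0 : x ^ e ≠ 0 := pow_ne_zero _ hx
    rw [Finset.mem_product]
    constructor
    · -- u-component in Uset
      simp only [Uset, Finset.mem_filter, Finset.mem_univ, true_and]
      have hxq1 : x ^ (q + 1) ≠ 0 := pow_ne_zero _ hx
      have ht1 : 1 ≤ t := Nat.one_le_two_pow
      have hid : e * (q + 1) = (q + 1) + (q * q - 1) * (t + 1) := by
        rw [he, hq]
        exact natid1 t ht1
      have hpow : (x ^ e) ^ (q + 1) = x ^ (q + 1) := by
        have h2 : x ^ ((q * q - 1) * (t + 1)) = (x ^ (q * q - 1)) ^ (t + 1) := pow_mul x _ _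
        rw [← pow_mul, hid, pow_add, h2, hx1, one_pow, mul_one]
      rw [mul_pow, inv_pow, hpow, mul_inv_cancel₀ hxq1]
    · -- y-component in Kstar
      simp only [Kstar, Finset.mem_filter, Finset.mem_univ, true_and]
      refine ⟨?_, hxe0⟩
      have hid : e * q = e + (q * q - 1) * t := by
        rw [he]
        exact natid2 q t Nat.one_le_two_pow
      have h2 : x ^ ((q * q - 1) * t) = (x ^ (q * q - 1)) ^ t := pow_mul x _ _
      rw [← pow_mul, hid, pow_add, h2, hx1, one_pow, mul_one]
  · -- left inverse
    rintro ⟨u, y⟩ hp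
    rw [Finset.mem_product] at hp
    obtain ⟨hu, hy⟩ := hp
    simp only [Uset, Kstar, Finset.mem_filter, Finset.mem_univ, true_and] at hu hy
    have hy0 : y ≠ 0 := hy.2
    have hye : (u * y) ^ e = y := by
      rw [mul_pow, he, pow_mul, hu, one_pow, one_mul, pow_mul]
      have hyq1 : y ^ (q + 1) = y ^ 2 := by
        have h1 : (1:ℕ) ≤ q := Nat.one_le_two_pow
        have : y ^ (q + 1) = y ^ q * y := pow_succ y q
        rw [this, hy.1, ← pow_two]
      rw [hyq1, ← pow_mul]
      have : 2 * t = q := hq.symm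
      rw [this, hy.1]
    dsimp only
    rw [hye, mul_inv_cancel_right₀ hy0]
  · -- right inverse
    intro x hx
    simp only [Finset.mem_filter, Finset.mem_univ, true_and] at hx
    dsimp only
    rw [inv_mul_cancel_right₀ (pow_ne_zero _ hx)]
  · intro p _; rfl


lemma U_inter_Kstar (m : ℕ) : Uset m F ∩ Kstar m F = {1} := by
  ext x
  simp only [Finset.mem_inter, mem_Uset, mem_Kstar, Finset.mem_singleton]
  constructor
  · rintro ⟨hU, hK, hx0⟩
    rw [pow_succ, hK] at hU
    exact mul_self_eq_one_iff'.mp hU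
  · rintro rfl
    refine ⟨one_pow _, one_pow _, one_ne_zero⟩

lemma phi_mem_Kstar {w : F} (hw : w ≠ 0) (hw1 : w ≠ 1)
    (hwq : w ^ (2 ^ m) = w ∨ w ^ (2 ^ m) = w⁻¹) : w + w⁻¹ ∈ Kstar m F := by
  rw [mem_Kstar]
  constructor
  · rw [add_pow_char_pow, inv_pow]
    rcases hwq with h | h
    · rw [h]
    · rw [h, inv_inv, add_comm]
  · intro h
    rw [add_eq_zero_iff_eq'] at h
    have : w * w = 1 := by
      nth_rewrite 2 [h]
      exact mul_inv_cancel₀ hw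
    exact hw1 (mul_self_eq_one_iff'.mp this)

lemma phi_sum (hm : 0 < m) (hcard : Fintype.card F = 2 ^ (2 * m)) (G : F → ℤ) :
    ∑ w ∈ ((Uset m F) ∪ (Kstar m F)).erase 1, G (w + w⁻¹)
      = 2 * ∑ c ∈ Kstar m F, G c := by
  classical
  set S : Finset F := ((Uset m F) ∪ (Kstar m F)).erase 1 with hS
  have hmemS : ∀ w ∈ S, w ≠ 0 ∧ w ≠ 1 ∧ (w ^ (2 ^ m) = w ∨ w ^ (2 ^ m) = w⁻¹) := by
    intro w hw
    rw [hS, Finset.mem_erase, Finset.mem_union] at hw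
    obtain ⟨hw1, hw2⟩ := hw
    refine ⟨?_, hw1, ?_⟩
    · rcases hw2 with h | h
      · exact U_ne_zero h
      · exact (mem_Kstar.mp h).2
    · rcases hw2 with h | h
      · exact Or.inr (U_pow_q h)
      · exact Or.inl (mem_Kstar.mp h).1
  have hinvS : ∀ w ∈ S, w⁻¹ ∈ S := by
    intro w hw
    obtain ⟨hw0, hw1, hwq⟩ := hmemS w hw
    rw [hS, Finset.mem_erase, Finset.mem_union] at hw ⊢
    constructor
    · rw [ne_eq, inv_eq_one]; exact hw1
    · rcases hw.2 with h | h
      · left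
        rw [mem_Uset] at h ⊢
        rw [inv_pow, h, inv_one]
      · right
        rw [mem_Kstar] at h ⊢
        exact ⟨by rw [inv_pow, h.1], inv_ne_zero h.2⟩
  have hself : ∀ w ∈ S, w ≠ w⁻¹ := by
    intro w hw heq
    obtain ⟨hw0, hw1, _⟩ := hmemS w hw
    apply hw1
    apply mul_self_eq_one_iff'.mp
    nth_rewrite 2 [heq]
    exact mul_inv_cancel₀ hw0
  -- fibers of φ have exactly 2 elements
  have hfib : ∀ c ∈ S.image (fun w => w + w⁻¹),
      (S.filter (fun w => w + w⁻¹ = c)).card = 2 := by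
    intro c hc
    rw [Finset.mem_image] at hc
    obtain ⟨w₀, hw₀S, hw₀c⟩ := hc
    obtain ⟨hw₀0, hw₀1, _⟩ := hmemS w₀ hw₀S
    have hfil : S.filter (fun w => w + w⁻¹ = c) = {w₀, w₀⁻¹} := by
      ext w
      simp only [Finset.mem_filter, Finset.mem_insert, Finset.mem_singleton]
      constructor
      · rintro ⟨hwS, hwc⟩
        obtain ⟨hw0, hw1, _⟩ := hmemS w hwS
        have hphi : w + w⁻¹ = w₀ + w₀⁻¹ := by rw [hwc, hw₀c]
        have h2 : (2:F) = 0 := CharTwo.two_eq_zero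
        have key : (w + w₀) * (w + w₀⁻¹) = 0 := by
          have e1 : (w + w₀) * (w + w₀⁻¹)
              = w * w + w * (w₀ + w₀⁻¹) + w₀ * w₀⁻¹ := by ring
          rw [mul_inv_cancel₀ hw₀0, ← hphi] at e1
          have e2 : w * (w + w⁻¹) = w * w + 1 := by field_simp
          rw [e2] at e1
          rw [e1]
          linear_combination (w * w + 1) * h2
        rcases mul_eq_zero.mp key with h | h
        · exact Or.inl (add_eq_zero_iff_eq'.mp h)
        · exact Or.inr (add_eq_zero_iff_eq'.mp h)
      · rintro (rfl | rfl)
        · exact ⟨hw₀S, hw₀c⟩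
        · refine ⟨hinvS w₀ hw₀S, ?_⟩
          rw [inv_inv, add_comm]
          exact hw₀c
    rw [hfil]
    rw [Finset.card_insert_of_notMem (by simpa using hself w₀ hw₀S), Finset.card_singleton]
  -- image of φ is Kstar
  have himg : S.image (fun w => w + w⁻¹) ⊆ Kstar m F := by
    intro c hc
    rw [Finset.mem_image] at hc
    obtain ⟨w, hwS, hwc⟩ := hc
    obtain ⟨hw0, hw1, hwq⟩ := hmemS w hwS
    rw [← hwc]
    exact phi_mem_Kstar hw0 hw1 hwq
  have hcardS : S.card = 2 * (2 ^ m) - 2 := by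
    have h1 : (1:F) ∈ Uset m F ∪ Kstar m F := by
      rw [Finset.mem_union, mem_Uset]
      exact Or.inl (one_pow _)
    have hcu : (Uset m F ∪ Kstar m F).card + (Uset m F ∩ Kstar m F).card
        = (Uset m F).card + (Kstar m F).card := Finset.card_union_add_card_inter _ _
    rw [U_inter_Kstar, Finset.card_singleton, card_Uset hm hcard, card_Kstar hm hcard] at hcu
    rw [hS, Finset.card_erase_of_mem h1]
    have h2 : (1:ℕ) ≤ 2 ^ m := Nat.one_le_two_pow
    omega
  have hcard_img : (S.image (fun w => w + w⁻¹)).card = 2 ^ m - 1 := by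
    have hfw : ∀ w ∈ S, w + w⁻¹ ∈ S.image (fun w => w + w⁻¹) := by
      intro w hw; exact Finset.mem_image_of_mem _ hw
    have := Finset.card_eq_sum_card_fiberwise hfw
    rw [Finset.sum_congr rfl (fun c hc => hfib c hc), Finset.sum_const, smul_eq_mul, hcardS] at this
    have h2 : (1:ℕ) ≤ 2 ^ m := Nat.one_le_two_pow
    omega
  have himg_eq : S.image (fun w => w + w⁻¹) = Kstar m F := by
    apply Finset.eq_of_subset_of_card_le himg
    rw [card_Kstar hm hcard, hcard_img]
  rw [Finset.sum_comp G (fun w => w + w⁻¹)]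
  rw [Finset.sum_congr rfl (fun c hc => by rw [hfib c hc])]
  rw [himg_eq, Finset.mul_sum]
  exact Finset.sum_congr rfl (fun c _ => by rw [two_smul]; ring)


lemma T_eval (hm : 0 < m) (hcard : Fintype.card F = 2 ^ (2 * m))
    {ν : F} (hνK : ν ^ (2 ^ m) = ν) (hν0 : ν ≠ 0) :
    ∑ u ∈ Uset m F, eps (trM m (ν * (u + u⁻¹))) = - klooM m (ν * ν) := by
  classical
  set G : F → ℤ := fun c => eps (trM m (ν * c)) with hG
  have hshow : (∑ u ∈ Uset m F, eps (trM m (ν * (u + u⁻¹))))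
      = ∑ u ∈ Uset m F, G (u + u⁻¹) := rfl
  rw [hshow]
  have h1U : (1:F) ∈ Uset m F := mem_Uset.mpr (one_pow _)
  have h1mem : (1:F) ∈ Uset m F ∪ Kstar m F := Finset.mem_union_left _ h1U
  have hins : Uset m F ∪ Kstar m F = insert 1 (((Uset m F) ∪ (Kstar m F)).erase 1) :=
    (Finset.insert_erase h1mem).symm
  have hsum_ui : (∑ u ∈ Uset m F, G (u + u⁻¹)) + ∑ w ∈ Kstar m F, G (w + w⁻¹)
      = (∑ w ∈ (Uset m F ∪ Kstar m F), G (w + w⁻¹))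
        + ∑ w ∈ (Uset m F ∩ Kstar m F), G (w + w⁻¹) :=
    (Finset.sum_union_inter).symm
  rw [U_inter_Kstar, Finset.sum_singleton, hins,
    Finset.sum_insert (Finset.notMem_erase _ _), phi_sum hm hcard] at hsum_ui
  have h10 : (1:F) + 1⁻¹ = 0 := by rw [inv_one, CharTwo.add_self_eq_zero]
  rw [h10] at hsum_ui
  have hG0 : G 0 = 1 := by
    rw [hG]; simp only; rw [mul_zero, trM_zero, eps_zero]
  have hsumK : ∑ c ∈ Kstar m F, G c = -1 := by
    have h := inner_sum (F := F) hm hcard hνK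
    rw [if_neg hν0] at h
    exact h
  have hkloo : ∑ w ∈ Kstar m F, G (w + w⁻¹) = klooM m (ν * ν) := by
    have hre : ∑ x ∈ Kstar m F, eps (trM m (x + (ν*ν) * x⁻¹))
        = ∑ w ∈ Kstar m F, eps (trM m (ν * w + (ν*ν) * (ν * w)⁻¹)) :=
      (sum_Kstar_mul hνK hν0 (fun x => eps (trM m (x + (ν*ν) * x⁻¹)))).symm
    have heq : ∀ w ∈ Kstar m F, eps (trM m (ν * w + (ν*ν) * (ν * w)⁻¹)) = G (w + w⁻¹) := by
      intro w hw
      have hw0 : w ≠ 0 := (mem_Kstar.mp hw).2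
      have harg : ν * w + (ν*ν) * (ν * w)⁻¹ = ν * (w + w⁻¹) := by
        field_simp
      rw [harg, hG]
    have hdef : klooM m (ν * ν) = ∑ x ∈ Kstar m F, eps (trM m (x + (ν*ν) * x⁻¹)) := rfl
    rw [hdef, hre, Finset.sum_congr rfl heq]
  rw [hG0, hsumK, hkloo] at hsum_ui
  omega


lemma card_c_one_odd (hm : 0 < m) (hcard : Fintype.card F = 2 ^ (2 * m)) (hmo : Odd m) :
    ((Uset m F).filter (fun u => u + u⁻¹ = 1)).card = 2 := by
  classical
  have h3card : (Finset.univ.filter fun x : F => x ^ 3 = 1).card = 3 :=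
    card_pow_eq_one (by norm_num) (dvd3_card hcard)
  have hset : (Uset m F).filter (fun u => u + u⁻¹ = 1)
      = (Finset.univ.filter fun x : F => x ^ 3 = 1).erase 1 := by
    ext u
    simp only [Finset.mem_filter, Finset.mem_erase, Finset.mem_univ, true_and, mem_Uset]
    constructor
    · rintro ⟨hU, hc⟩
      have hu0 : u ≠ 0 := by
        intro h; rw [h, zero_pow (Nat.succ_ne_zero _)] at hU; exact zero_ne_one hU
      obtain ⟨h3, h1⟩ := cube_of_c hu0 hc
      exact ⟨h1, h3⟩
    · rintro ⟨h1, h3⟩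
      refine ⟨?_, cube_iff h3 h1⟩
      obtain ⟨k, hk⟩ := dvd3_odd (m := m) hmo
      rw [hk, pow_mul, h3, one_pow]
  rw [hset, Finset.card_erase_of_mem, h3card]
  simp only [Finset.mem_filter, Finset.mem_univ, true_and, one_pow]

lemma card_c_one_even (hm : 0 < m) (hcard : Fintype.card F = 2 ^ (2 * m)) (hme : Even m) :
    ((Uset m F).filter (fun u => u + u⁻¹ = 1)).card = 0 := by
  rw [Finset.card_eq_zero, Finset.filter_eq_empty_iff]
  intro u hU
  rw [mem_Uset] at hU
  intro hc
  have hu0 : u ≠ 0 := by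
    intro h; rw [h, zero_pow (Nat.succ_ne_zero _)] at hU; exact zero_ne_one hU
  obtain ⟨h3, h1⟩ := cube_of_c hu0 hc
  obtain ⟨k, hk⟩ := dvd3_even (m := m) hme
  have h1q : (1:ℕ) ≤ 2 ^ m := Nat.one_le_two_pow
  have hqe : 2 ^ m = 3 * k + 1 := by omega
  have hupow : u ^ (2 ^ m) = u := by
    rw [hqe, pow_succ, pow_mul, h3, one_pow, one_mul]
  rw [pow_succ, hupow] at hU
  exact h1 (mul_self_eq_one_iff'.mp hU)



lemma trN_idem (hcard : Fintype.card F = 2 ^ (2 * m)) (x : F) :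
    trN m x = 0 ∨ trN m x = 1 := by
  rw [trN_eq_trM]
  apply trM_idem
  rw [add_pow_char_pow, ← pow_mul, pow_qq hcard, add_comm]

lemma pow_q1K (hcard : Fintype.card F = 2 ^ (2 * m)) (x : F) :
    (x ^ (2 ^ m + 1)) ^ (2 ^ m) = x ^ (2 ^ m + 1) := by
  rw [← pow_mul, show (2 ^ m + 1) * 2 ^ m = 2 ^ m * 2 ^ m + 2 ^ m from by ring,
    pow_add, pow_qq hcard, pow_succ, mul_comm]

lemma U_pow_q_sub_one {u : F} (hu : u ∈ Uset m F) :
    u ^ (2 ^ m - 1) = u⁻¹ * u⁻¹ := by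
  have hu0 := U_ne_zero hu
  have h1 : (1:ℕ) ≤ 2 ^ m := Nat.one_le_two_pow
  apply mul_right_cancel₀ hu0
  rw [← pow_succ, Nat.sub_add_cancel h1, U_pow_q hu, mul_assoc, inv_mul_cancel₀ hu0, mul_one]

lemma c_pow_q {u : F} (hu : u ∈ Uset m F) :
    (u + u⁻¹) ^ (2 ^ m) = u + u⁻¹ := by
  rw [add_pow_char_pow, U_pow_q hu, inv_pow, U_pow_q hu, inv_inv, add_comm]

lemma sum_univ_split (h : F → ℤ) :
    ∑ x : F, h x = h 0 + ∑ x ∈ Finset.univ.filter (fun x : F => x ≠ 0), h x := by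
  have h1 : Finset.univ.filter (fun x : F => x = 0) = {0} := by
    rw [Finset.filter_eq']
    simp
  rw [← Finset.sum_filter_add_sum_filter_not Finset.univ (fun x : F => x = 0) h, h1,
    Finset.sum_singleton]

lemma S1_eval (hm : 0 < m) (hcard : Fintype.card F = 2 ^ (2 * m)) :
    ∑ x : F, eps (trM m (x ^ (2 ^ m + 1))) = -(2 ^ m : ℤ) := by
  rw [sum_univ_split, sum_Fstar hm hcard]
  rw [zero_pow (Nat.succ_ne_zero _), trM_zero, eps_zero]
  have hinner : ∀ u ∈ Uset m F,
      (∑ y ∈ Kstar m F, eps (trM m ((u * y) ^ (2 ^ m + 1)))) = -1 := by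
    intro u hu
    have hu1 : u ^ (2 ^ m + 1) = 1 := mem_Uset.mp hu
    have heq : ∀ y ∈ Kstar m F, eps (trM m ((u * y) ^ (2 ^ m + 1)))
        = eps (trM m (1 * y)) := by
      intro y hy
      obtain ⟨hyK, hy0⟩ := mem_Kstar.mp hy
      have hpow : (u * y) ^ (2 ^ m + 1) = y ^ 2 := by
        rw [mul_pow, hu1, one_mul, pow_succ, hyK, ← pow_two]
      rw [hpow, trM_sq_arg hyK, one_mul]
    rw [Finset.sum_congr rfl heq, inner_sum hm hcard (one_pow _), if_neg one_ne_zero]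
  rw [Finset.sum_congr rfl hinner, Finset.sum_const, card_Uset hm hcard]
  push_cast
  ring

lemma S2_eval (hm : 0 < m) (hcard : Fintype.card F = 2 ^ (2 * m)) :
    ∑ x : F, eps (trM m (x ^ (2 ^ m + 1)) + trN m x)
      = if Odd m then ((2:ℤ) ^ m) else (-(2:ℤ) ^ m) := by
  rw [sum_univ_split, sum_Fstar hm hcard]
  rw [zero_pow (Nat.succ_ne_zero _), trM_zero, trN_zero, add_zero, eps_zero]
  have hinner : ∀ u ∈ Uset m F,
      (∑ y ∈ Kstar m F, eps (trM m ((u * y) ^ (2 ^ m + 1)) + trN m (u * y)))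
        = if u + u⁻¹ = 1 then ((2:ℤ) ^ m - 1) else -1 := by
    intro u hu
    have hu1 : u ^ (2 ^ m + 1) = 1 := mem_Uset.mp hu
    have huq := U_pow_q hu
    have haK : (1 + (u + u⁻¹)) ^ (2 ^ m) = 1 + (u + u⁻¹) := by
      rw [add_pow_char_pow, one_pow, c_pow_q hu]
    have heq : ∀ y ∈ Kstar m F, eps (trM m ((u * y) ^ (2 ^ m + 1)) + trN m (u * y))
        = eps (trM m ((1 + (u + u⁻¹)) * y)) := by
      intro y hy
      obtain ⟨hyK, hy0⟩ := mem_Kstar.mp hy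
      have h1 : (u * y) ^ (2 ^ m + 1) = y ^ 2 := by
        rw [mul_pow, hu1, one_mul, pow_succ, hyK, ← pow_two]
      have h2 : trN m (u * y) = trM m (u * y + u⁻¹ * y) := by
        rw [trN_eq_trM, mul_pow, huq, hyK]
      rw [h1, trM_sq_arg hyK, h2, ← trM_add]
      congr 1
      ring
    rw [Finset.sum_congr rfl heq, inner_sum hm hcard haK]
    have hcond : (1 + (u + u⁻¹) = 0) ↔ (u + u⁻¹ = 1) := by
      rw [add_comm, add_eq_zero_iff_eq']
    by_cases hc : u + u⁻¹ = 1
    · rw [if_pos (hcond.mpr hc), if_pos hc]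
    · rw [if_neg (fun h => hc (hcond.mp h)), if_neg hc]
  rw [Finset.sum_congr rfl hinner, Finset.sum_ite, Finset.sum_const, Finset.sum_const]
  have hsplit : ((Uset m F).filter (fun u => u + u⁻¹ = 1)).card
      + ((Uset m F).filter (fun u => ¬ (u + u⁻¹ = 1))).card = (Uset m F).card :=
    Finset.card_filter_add_card_filter_not _
  rw [card_Uset hm hcard] at hsplit
  by_cases hmo : Odd m
  · rw [if_pos hmo]
    have he := card_c_one_odd hm hcard hmo
    rw [he] at hsplit
    rw [he]
    have hnc : ((Uset m F).filter (fun u => ¬ (u + u⁻¹ = 1))).card = 2 ^ m - 1 := by omega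
    rw [hnc, nsmul_eq_mul, nsmul_eq_mul, Nat.cast_sub Nat.one_le_two_pow]
    push_cast
    ring
  · rw [if_neg hmo]
    have he := card_c_one_even hm hcard (Nat.not_odd_iff_even.mp hmo)
    rw [he] at hsplit
    rw [he]
    have hnc : ((Uset m F).filter (fun u => ¬ (u + u⁻¹ = 1))).card = 2 ^ m + 1 := by omega
    rw [hnc, nsmul_eq_mul, nsmul_eq_mul]
    push_cast
    ring

lemma trN_mu_arg (hm : 0 < m) (hcard : Fintype.card F = 2 ^ (2 * m))
    {ν : F} (hνK : ν ^ (2 ^ m) = ν) {u y : F} (hu : u ∈ Uset m F) (hy : y ∈ Kstar m F) :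
    trN m ((ν * ν) * (u * y) ^ (2 ^ m - 1)) = trM m (ν * (u + u⁻¹)) := by
  obtain ⟨hyK, hy0⟩ := mem_Kstar.mp hy
  have hu0 := U_ne_zero hu
  have h1 : (u * y) ^ (2 ^ m - 1) = u⁻¹ * u⁻¹ := by
    rw [mul_pow, Kstar_pow hy hm, mul_one, U_pow_q_sub_one hu]
  rw [h1, trN_eq_trM]
  have hz : (ν * ν * (u⁻¹ * u⁻¹)) ^ (2 ^ m) = ν * ν * (u * u) := by
    rw [mul_pow, mul_pow, hνK, mul_pow, inv_pow, U_pow_q hu, inv_inv]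
  rw [hz]
  have harg : ν * ν * (u⁻¹ * u⁻¹) + ν * ν * (u * u) = (ν * (u + u⁻¹)) ^ 2 := by
    have h2 : (2:F) = 0 := CharTwo.two_eq_zero
    field_simp
    linear_combination (-(ν ^ 2 * u ^ 2)) * h2
  rw [harg]
  apply trM_sq_arg
  rw [mul_pow, hνK, c_pow_q hu]

lemma B1_eval (hm : 0 < m) (hcard : Fintype.card F = 2 ^ (2 * m))
    {ν : F} (hνK : ν ^ (2 ^ m) = ν) (hν0 : ν ≠ 0) :
    ∑ x : F, eps (trN m ((ν * ν) * x ^ (2 ^ m - 1)))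
      = 1 + ((2:ℤ) ^ m - 1) * ∑ u ∈ Uset m F, eps (trM m (ν * (u + u⁻¹))) := by
  have hq2 : (2:ℕ) ≤ 2 ^ m := by
    calc (2:ℕ) = 2 ^ 1 := (pow_one 2).symm
    _ ≤ 2 ^ m := Nat.pow_le_pow_right (by norm_num) hm
  rw [sum_univ_split, sum_Fstar hm hcard]
  rw [zero_pow (show 2 ^ m - 1 ≠ 0 by omega), mul_zero, trN_zero, eps_zero]
  have hinner : ∀ u ∈ Uset m F,
      (∑ y ∈ Kstar m F, eps (trN m ((ν * ν) * (u * y) ^ (2 ^ m - 1))))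
        = ((2:ℤ) ^ m - 1) * eps (trM m (ν * (u + u⁻¹))) := by
    intro u hu
    have heq : ∀ y ∈ Kstar m F, eps (trN m ((ν * ν) * (u * y) ^ (2 ^ m - 1)))
        = eps (trM m (ν * (u + u⁻¹))) := by
      intro y hy
      rw [trN_mu_arg hm hcard hνK hu hy]
    rw [Finset.sum_congr rfl heq, Finset.sum_const, card_Kstar hm hcard, nsmul_eq_mul,
      Nat.cast_sub (by omega : (1:ℕ) ≤ 2 ^ m)]
    push_cast
    ring
  rw [Finset.sum_congr rfl hinner, ← Finset.mul_sum]

lemma inner_sum_shift (hm : 0 < m) (hcard : Fintype.card F = 2 ^ (2 * m))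
    {ν : F} (hνK : ν ^ (2 ^ m) = ν) {c : F} (hcK : c ^ (2 ^ m) = c) :
    ∑ y ∈ Kstar m F, eps (trM m ((ν + y) * c))
      = if c = 0 then ((2:ℤ) ^ m - 1) else - eps (trM m (ν * c)) := by
  split_ifs with hc
  · subst hc
    have heq : ∀ y ∈ Kstar m F, eps (trM m ((ν + y) * 0)) = 1 := by
      intro y _
      rw [mul_zero, trM_zero, eps_zero]
    rw [Finset.sum_congr rfl heq, Finset.sum_const, card_Kstar hm hcard, nsmul_eq_mul,
      mul_one, Nat.cast_sub Nat.one_le_two_pow]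
    push_cast
    ring
  · have h0 : ∑ y ∈ Kset m F, eps (trM m ((ν + y) * c)) = 0 := by
      rw [sum_Kset_add hνK (fun y => eps (trM m (y * c)))]
      have heq : ∀ y ∈ Kset m F, eps (trM m (y * c)) = eps (trM m (c * y)) := by
        intro y _; rw [mul_comm]
      rw [Finset.sum_congr rfl heq, sum_Kset_mul hcK hc (fun z => eps (trM m z))]
      exact sum_eps_Kset hm hcard
    rw [Kset_insert, Finset.sum_insert zero_not_mem_Kstar, add_zero] at h0
    omega

lemma B2_eval (hm : 0 < m) (hcard : Fintype.card F = 2 ^ (2 * m))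
    {ν : F} (hνK : ν ^ (2 ^ m) = ν) (hν0 : ν ≠ 0) :
    ∑ x : F, eps (trN m ((ν * ν) * x ^ (2 ^ m - 1)) + trN m x)
      = (2:ℤ) ^ m + 1 - ∑ u ∈ Uset m F, eps (trM m (ν * (u + u⁻¹))) := by
  have hq2 : (2:ℕ) ≤ 2 ^ m := by
    calc (2:ℕ) = 2 ^ 1 := (pow_one 2).symm
    _ ≤ 2 ^ m := Nat.pow_le_pow_right (by norm_num) hm
  rw [sum_univ_split, sum_Fstar hm hcard]
  rw [zero_pow (show 2 ^ m - 1 ≠ 0 by omega), mul_zero, trN_zero, add_zero, eps_zero]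
  have hinner : ∀ u ∈ Uset m F,
      (∑ y ∈ Kstar m F, eps (trN m ((ν * ν) * (u * y) ^ (2 ^ m - 1)) + trN m (u * y)))
        = - eps (trM m (ν * (u + u⁻¹))) + (if u = 1 then (2:ℤ) ^ m else 0) := by
    intro u hu
    have hu0 := U_ne_zero hu
    have huq := U_pow_q hu
    have heq : ∀ y ∈ Kstar m F,
        eps (trN m ((ν * ν) * (u * y) ^ (2 ^ m - 1)) + trN m (u * y))
          = eps (trM m ((ν + y) * (u + u⁻¹))) := by
      intro y hy
      obtain ⟨hyK, hy0⟩ := mem_Kstar.mp hy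
      have h2 : trN m (u * y) = trM m (u * y + u⁻¹ * y) := by
        rw [trN_eq_trM, mul_pow, huq, hyK]
      rw [trN_mu_arg hm hcard hνK hu hy, h2, ← trM_add]
      congr 1
      ring
    rw [Finset.sum_congr rfl heq, inner_sum_shift hm hcard hνK (c_pow_q hu)]
    by_cases hu1 : u = 1
    · subst hu1
      rw [if_pos ((c_zero_iff one_ne_zero).mpr rfl), if_pos rfl,
        show (1:F) + 1⁻¹ = 0 from (c_zero_iff one_ne_zero).mpr rfl, mul_zero, trM_zero,
        eps_zero]
      ring
    · rw [if_neg (fun h => hu1 ((c_zero_iff hu0).mp h)), if_neg hu1, add_zero]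
  rw [Finset.sum_congr rfl hinner, Finset.sum_add_distrib,
    Finset.sum_ite_eq' (Uset m F) 1 (fun _ => (2:ℤ) ^ m), if_pos one_mem_Uset,
    Finset.sum_neg_distrib]
  ring

lemma walsh_decomp (hm : 0 < m) (hcard : Fintype.card F = 2 ^ (2 * m))
    {l : F} (hl : l + l ^ (2 ^ m) = 1) (μ : F) :
    2 * walsh m (gFun m l μ) 1
      = (∑ x : F, eps (trM m (x ^ (2 ^ m + 1))))
        + (∑ x : F, eps (trM m (x ^ (2 ^ m + 1)) + trN m x))
        - (∑ x : F, eps (trN m (μ * x ^ (2 ^ m - 1))))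
        + (∑ x : F, eps (trN m (μ * x ^ (2 ^ m - 1)) + trN m x)) := by
  unfold walsh gFun
  rw [Finset.mul_sum, ← Finset.sum_add_distrib, ← Finset.sum_sub_distrib,
    ← Finset.sum_add_distrib]
  apply Finset.sum_congr rfl
  intro x _
  rw [one_mul]
  have hf1 : trN m (l * x ^ (2 ^ m + 1)) = trM m (x ^ (2 ^ m + 1)) :=
    trN_lambda hl (pow_q1K hcard x)
  have hf1mem : trM m (x ^ (2 ^ m + 1)) = 0 ∨ trM m (x ^ (2 ^ m + 1)) = 1 :=
    trM_idem (pow_q1K hcard x)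
  have hf2mem : trN m (μ * x ^ (2 ^ m - 1)) = 0 ∨ trN m (μ * x ^ (2 ^ m - 1)) = 1 :=
    trN_idem hcard _
  rw [hf1]
  rcases trN_idem hcard x with ht | ht
  · rw [ht]
    simp only [add_zero, zero_mul, one_mul, zero_add]
    ring
  · rw [ht]
    rw [show (1:F) + 1 = 0 from CharTwo.add_self_eq_zero 1]
    simp only [zero_mul, one_mul, zero_add]
    rw [eps_add_one hf1mem, eps_add_one hf2mem]
    ring

end C2
end Sets
end Stmt17


open Stmt17

theorem stmt17 (m : ℕ) (hm : 0 < m) (F : Type*) [Field F] [Fintype F] [DecidableEq F]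
    (hcard : Fintype.card F = 2 ^ (2 * m))
    (l : F) (hl : l + l ^ (2 ^ m) = 1)
    (μ : F) (hμK : μ ^ (2 ^ m) = μ) (hμ0 : μ ≠ 0) :
    (Odd m → walsh m (gFun m l μ) 1 = (2 ^ (m - 1) : ℤ) * (1 + klooM m μ)) ∧
    (Even m → walsh m (gFun m l μ) 1 = (2 ^ (m - 1) : ℤ) * (klooM m μ - 1)) := by
  haveI hchar : CharP F 2 := by
    haveI := ringChar.charP F
    obtain ⟨n, hp, hc⟩ := FiniteField.card F (ringChar F)
    rw [hcard] at hc
    have hdvd : ringChar F ∣ 2 ^ (2 * m) := hc ▸ dvd_pow_self (ringChar F) n.pos.ne'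
    have h2 : ringChar F = 2 :=
      (Nat.prime_dvd_prime_iff_eq hp Nat.prime_two).mp (hp.dvd_of_dvd_pow hdvd)
    rw [← h2]
    exact ringChar.charP F
  set ν : F := μ ^ (2 ^ (m - 1)) with hν
  have hνν : ν * ν = μ := by
    rw [hν, ← pow_add]
    have he : 2 ^ (m - 1) + 2 ^ (m - 1) = 2 ^ m := by
      rw [← two_mul, ← pow_succ']
      congr 1
      omega
    rw [he, hμK]
  have hνK : ν ^ (2 ^ m) = ν := by
    rw [hν, ← pow_mul, mul_comm, pow_mul, hμK]
  have hν0 : ν ≠ 0 := pow_ne_zero _ hμ0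
  have hdec := walsh_decomp hm hcard hl μ
  have hS1 := S1_eval hm hcard
  have hS2 := S2_eval hm hcard
  have hT := T_eval hm hcard hνK hν0
  rw [hνν] at hT
  have hB1 := B1_eval hm hcard hνK hν0
  rw [hνν] at hB1
  have hB2 := B2_eval hm hcard hνK hν0
  rw [hνν] at hB2
  have hpow : (2:ℤ) ^ m = 2 * 2 ^ (m - 1) := by
    rw [← pow_succ']
    congr 1
    omega
  constructor
  · intro hmo
    rw [if_pos hmo] at hS2
    have h2W : 2 * walsh m (gFun m l μ) 1
        = 2 * ((2 ^ (m - 1) : ℤ) * (1 + klooM m μ)) := by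
      rw [hdec, hS1, hS2, hB1, hB2, hT, hpow]
      ring
    exact mul_left_cancel₀ two_ne_zero h2W
  · intro hme
    rw [if_neg (Nat.not_odd_iff_even.mpr hme)] at hS2
    have h2W : 2 * walsh m (gFun m l μ) 1
        = 2 * ((2 ^ (m - 1) : ℤ) * (klooM m μ - 1)) := by
      rw [hdec, hS1, hS2, hB1, hB2, hT, hpow]
      ring
    exact mul_left_cancel₀ two_ne_zero h2W
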